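/- Let (𝔤, 𝔥, σ, I₀, ⟨,⟩) be a para-Hermitian symmetric system with 𝔤 simple whose isotropy center is two-dimensional, so that 𝔤 admits a complex structure i commuting with σ. Then for every (λ,μ) ≠ (0,0), the bilinear form f_{(λ,μ)}(X,Y) = λB(X,Y) + μB(iX,Y) restricted to the (−1)-eigenspace 𝔫 of σ is a nondegenerate symmetric bilinear form of signature (n,n), where dim_ℝ 𝔫 = 2n and B is the Killing form of 𝔤. -/

import Mathlib

open Module

/-- The real bilinear form `f_{(λ,μ)}(X,Y) = λB(X,Y) + μB(iX,Y)` on a complex Lie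
algebra `𝔤` viewed as a real Lie algebra, where `B = 2 Re B̃` is the real Killing form
(`B̃` the complex Killing form) and `i` is the complex structure. -/
noncomputable def fForm (𝔤 : Type*) [LieRing 𝔤] [LieAlgebra ℂ 𝔤] (lam mu : ℝ) :
    𝔤 → 𝔤 → ℝ := fun X Y =>
  lam * (2 * (killingForm ℂ 𝔤 X Y).re)
    + mu * (2 * (killingForm ℂ 𝔤 ((Complex.I : ℂ) • X) Y).re)

lemma fForm_eq (𝔤 : Type*) [LieRing 𝔤] [LieAlgebra ℂ 𝔤] (lam mu : ℝ) (X Y : 𝔤) :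
    fForm 𝔤 lam mu X Y = 2 * ((Complex.mk lam mu) * killingForm ℂ 𝔤 X Y).re := by
  have h : killingForm ℂ 𝔤 ((Complex.I:ℂ) • X) Y = Complex.I * killingForm ℂ 𝔤 X Y := by
    rw [map_smul]; rfl
  rw [fForm, h]
  have : (Complex.mk lam mu) = (lam : ℂ) + (mu : ℂ) * Complex.I := by
    apply Complex.ext <;> simp
  rw [this]
  simp [Complex.mul_re, Complex.add_re, Complex.mul_im]
  ring

set_option maxHeartbeats 1000000 in
/-- Let `(𝔤, 𝔥, σ, I₀, ⟨,⟩)` be a para-Hermitian symmetric system with `𝔤` simple and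
two-dimensional isotropy center, so that `𝔤` carries a complex structure `i` commuting
with `σ`.  Let `𝔫` be the `(−1)`-eigenspace of `σ`, with `dim_ℝ 𝔫 = 2n` and the
complex Killing form nondegenerate on `𝔫`.  Then for every `(λ,μ) ≠ (0,0)` the form
`f_{(λ,μ)}(X,Y) = λB(X,Y) + μB(iX,Y)` restricted to `𝔫` is a nondegenerate symmetric
bilinear form of signature `(n,n)`. -/
theorem fForm_nondegenerate_signature
    (𝔤 : Type*) [LieRing 𝔤] [LieAlgebra ℂ 𝔤] [Module.Finite ℂ 𝔤]
    [LieAlgebra.IsSimple ℂ 𝔤]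
    (σ : 𝔤 →ₗ[ℝ] 𝔤)
    (hσ2 : ∀ x, σ (σ x) = x)
    (hσbr : ∀ x y, σ ⁅x, y⁆ = ⁅σ x, σ y⁆)
    (hσi : ∀ x, σ ((Complex.I : ℂ) • x) = (Complex.I : ℂ) • σ x)
    (𝔫 : Submodule ℝ 𝔤) (h𝔫 : ∀ x, x ∈ 𝔫 ↔ σ x = -x)
    (n : ℕ) (hdim : finrank ℝ 𝔫 = 2 * n)
    (hnd : ∀ x ∈ 𝔫, (∀ y ∈ 𝔫, killingForm ℂ 𝔤 x y = 0) → x = 0) :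
    ∀ lam mu : ℝ, (lam, mu) ≠ (0, 0) →
      (∀ X ∈ 𝔫, ∀ Y ∈ 𝔫, fForm 𝔤 lam mu X Y = fForm 𝔤 lam mu Y X) ∧
      (∀ X ∈ 𝔫, (∀ Y ∈ 𝔫, fForm 𝔤 lam mu X Y = 0) → X = 0) ∧
      (∃ P Q : Submodule ℝ 𝔤, P ≤ 𝔫 ∧ Q ≤ 𝔫 ∧
        finrank ℝ P = n ∧ finrank ℝ Q = n ∧ P ⊓ Q = ⊥ ∧ P ⊔ Q = 𝔫 ∧
        (∀ x ∈ P, x ≠ 0 → 0 < fForm 𝔤 lam mu x x) ∧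
        (∀ x ∈ Q, x ≠ 0 → fForm 𝔤 lam mu x x < 0)) := by
  classical
  intro lam mu hne
  set K := killingForm ℂ 𝔤 with hK
  set c : ℂ := Complex.mk lam mu with hcdef
  have hc : c ≠ 0 := by
    intro h
    apply hne
    have h1 : c.re = 0 := by rw [h]; simp
    have h2 : c.im = 0 := by rw [h]; simp
    simp only [hcdef] at h1 h2
    simp only [Prod.mk.injEq]
    exact ⟨h1, h2⟩
  have key : ∀ X Y : 𝔤, fForm 𝔤 lam mu X Y = 2 * (c * K X Y).re :=
    fun X Y => fForm_eq 𝔤 lam mu X Y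
  have hKsymm : ∀ X Y : 𝔤, K X Y = K Y X := fun X Y => LieModule.traceForm_comm ℂ 𝔤 𝔤 X Y
  have hKsm1 : ∀ (z : ℂ) (X Y : 𝔤), K (z • X) Y = z * K X Y := by
    intro z X Y; rw [map_smul]; rfl
  have hKsm2 : ∀ (z : ℂ) (X Y : 𝔤), K X (z • Y) = z * K X Y := by
    intro z X Y; rw [map_smul]; rfl
  -- symmetry
  refine ⟨?_, ?_, ?_⟩
  · intro X _ Y _
    rw [key, key, hKsymm]
  -- nondegeneracy
  · intro X hX h0
    refine hnd X hX ?_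
    intro Y hY
    have hIY : (Complex.I : ℂ) • Y ∈ 𝔫 := by
      rw [h𝔫] at hY ⊢
      rw [hσi, hY, smul_neg]
    have e1 : (c * K X Y).re = 0 := by
      have := h0 Y hY; rw [key] at this; linarith
    have e2 : (c * K X Y).im = 0 := by
      have := h0 _ hIY
      rw [key, hKsm2] at this
      have h' : (c * (Complex.I * K X Y)).re = 0 := by linarith
      rw [show c * (Complex.I * K X Y) = Complex.I * (c * K X Y) by ring] at h'
      have h'' : (Complex.I * (c * K X Y)).re = -(c * K X Y).im := by
        simp [Complex.mul_re]
      rw [h''] at h'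
      linarith
    have : c * K X Y = 0 := Complex.ext e1 e2
    rcases mul_eq_zero.1 this with h | h
    · exact absurd h hc
    · exact h
  -- signature
  · -- σ is ℂ-linear
    have hσc : ∀ (z : ℂ) (x : 𝔤), σ (z • x) = z • σ x := by
      intro z x
      have hz : z = (z.re : ℂ) + (z.im : ℂ) * Complex.I := by
        apply Complex.ext <;> simp
      rw [hz]
      have h1 : ∀ y : 𝔤, ((z.re : ℂ) + (z.im : ℂ) * Complex.I) • y
          = (z.re : ℝ) • y + (Complex.I:ℂ) • ((z.im : ℝ) • y) := by
        intro y
        rw [add_smul, mul_comm, mul_smul, Complex.coe_smul, Complex.coe_smul]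
      rw [h1, h1, map_add, map_smul, hσi, map_smul]
    have hmemc : ∀ (z : ℂ) {x : 𝔤}, x ∈ 𝔫 → z • x ∈ 𝔫 := by
      intro z x hx
      rw [h𝔫] at hx ⊢
      rw [hσc, hx, smul_neg]
    -- 𝔫 as a complex submodule
    let N : Submodule ℂ 𝔤 :=
      { carrier := 𝔫
        add_mem' := fun h1 h2 => 𝔫.add_mem h1 h2
        zero_mem' := 𝔫.zero_mem
        smul_mem' := fun z x hx => hmemc z hx }
    have hNmem : ∀ x : 𝔤, x ∈ N ↔ x ∈ 𝔫 := fun _ => Iff.rfl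
    haveI : FiniteDimensional ℂ 𝔤 := ‹Module.Finite ℂ 𝔤›
    haveI : FiniteDimensional ℂ N := inferInstance
    -- orthogonal basis for the restricted killing form
    have hBsymm : ((K).restrict N).IsSymm := by
      refine ⟨fun x y => ?_⟩
      simpa using hKsymm x y
    set m := finrank ℂ N with hm
    obtain ⟨b, hb⟩ := LinearMap.BilinForm.exists_orthogonal_basis (LinearMap.BilinForm.isSymm_iff.1 hBsymm)
    set d : Fin m → ℂ := fun j => K (b j : 𝔤) (b j : 𝔤) with hd
    have hKb : ∀ j k : Fin m, K (b j : 𝔤) (b k : 𝔤) = if j = k then d j else 0 := by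
      intro j k
      by_cases h : j = k
      · subst h; simp [hd]
      · simp only [h, if_false]
        have := hb h
        simp only [Function.onFun, LinearMap.IsOrtho] at this
        simpa using this
    have hd0 : ∀ j, d j ≠ 0 := by
      intro j hj
      have hbz : (b j : 𝔤) = 0 := by
        refine hnd (b j : 𝔤) (b j).2 ?_
        intro y hy
        have hyN : (⟨y, hy⟩ : N) ∈ (⊤ : Submodule ℂ N) := trivial
        -- expand y in basis b
        have hrepr : ∑ k, (b.repr ⟨y, hy⟩ k) • b k = (⟨y, hy⟩ : N) := b.sum_repr _
        have : K (b j : 𝔤) y = K (b j : 𝔤) ((⟨y, hy⟩ : N) : 𝔤) := rfl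
        rw [this, ← hrepr]
        push_cast
        rw [map_sum]
        refine Finset.sum_eq_zero ?_
        intro k _
        rw [hKsm2, hKb]
        by_cases h : j = k
        · subst h; simp [← hd, hj]
        · simp [h]
      exact (b.ne_zero j) (by ext; simpa using hbz)
    -- choose scaling factors
    have hex : ∀ j : Fin m, ∃ r : ℂ, c * d j * r ^ 2 = 1 := by
      intro j
      obtain ⟨z, hz⟩ := IsAlgClosed.exists_pow_nat_eq ((c * d j)⁻¹) (n := 2) (by norm_num)
      exact ⟨z, by rw [hz, mul_inv_cancel₀ (mul_ne_zero hc (hd0 j))]⟩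
    choose r hr using hex
    have hr0 : ∀ j, r j ≠ 0 := by
      intro j h
      have := hr j
      rw [h] at this
      simp at this
    set u : Fin m → 𝔤 := fun j => (r j) • (b j : 𝔤) with hu
    set w : Fin m → 𝔤 := fun j => (Complex.I * r j) • (b j : 𝔤) with hw
    have humem : ∀ j, u j ∈ 𝔫 := fun j => hmemc _ (b j).2
    have hwmem : ∀ j, w j ∈ 𝔫 := fun j => hmemc _ (b j).2
    -- values of fForm on the basis
    have hFuu : ∀ j k, fForm 𝔤 lam mu (u j) (u k) = if j = k then 2 else 0 := by
      intro j k
      rw [key, hu]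
      simp only [hKsm1, hKsm2, hKb]
      by_cases h : j = k
      · subst h
        rw [if_pos rfl, if_pos rfl]
        rw [show c * (r j * (r j * d j)) = c * d j * r j ^ 2 by ring, hr j]
        norm_num
      · rw [if_neg h, if_neg h]; simp
    have hFww : ∀ j k, fForm 𝔤 lam mu (w j) (w k) = if j = k then -2 else 0 := by
      intro j k
      rw [key, hw]
      simp only [hKsm1, hKsm2, hKb]
      by_cases h : j = k
      · subst h
        rw [if_pos rfl, if_pos rfl]
        rw [show c * (Complex.I * r j * (Complex.I * r j * d j))
            = (Complex.I * Complex.I) * (c * d j * r j ^ 2) by ring, hr j,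
          Complex.I_mul_I]
        norm_num
      · rw [if_neg h, if_neg h]; simp
    have hFuw : ∀ j k, fForm 𝔤 lam mu (u j) (w k) = 0 := by
      intro j k
      rw [key, hu, hw]
      simp only [hKsm1, hKsm2, hKb]
      by_cases h : j = k
      · subst h
        rw [if_pos rfl]
        rw [show c * (r j * (Complex.I * r j * d j))
            = Complex.I * (c * d j * r j ^ 2) by ring, hr j]
        simp
      · rw [if_neg h]; simp
    -- real bilinearity of fForm in the form we need
    have hFsum : ∀ (a a' : Fin m → ℝ) (v v' : Fin m → 𝔤),
        fForm 𝔤 lam mu (∑ j, a j • v j) (∑ k, a' k • v' k)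
          = ∑ j, ∑ k, a j * a' k * fForm 𝔤 lam mu (v j) (v' k) := by
      intro a a' v v'
      have expand : (K (∑ j, a j • v j)) (∑ k, a' k • v' k)
          = ∑ j, ∑ k, ((a j : ℂ) * (a' k : ℂ)) * K (v j) (v' k) := by
        simp only [map_sum, LinearMap.sum_apply]
        rw [Finset.sum_comm]
        refine Finset.sum_congr rfl fun j _ => ?_
        refine Finset.sum_congr rfl fun k _ => ?_
        rw [← Complex.coe_smul, ← Complex.coe_smul, hKsm1, hKsm2]
        ring
      rw [key, expand, Finset.mul_sum, Complex.re_sum, Finset.mul_sum]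
      refine Finset.sum_congr rfl fun j _ => ?_
      rw [Finset.mul_sum, Complex.re_sum, Finset.mul_sum]
      refine Finset.sum_congr rfl fun k _ => ?_
      rw [key]
      rw [show c * ((a j : ℂ) * (a' k : ℂ) * K (v j) (v' k))
          = ((a j * a' k : ℝ) : ℂ) * (c * K (v j) (v' k)) by push_cast; ring]
      rw [Complex.re_ofReal_mul]
      ring
    -- the two subspaces
    set P : Submodule ℝ 𝔤 := Submodule.span ℝ (Set.range u) with hP
    set Q : Submodule ℝ 𝔤 := Submodule.span ℝ (Set.range w) with hQ
    have hPval : ∀ (a : Fin m → ℝ),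
        fForm 𝔤 lam mu (∑ j, a j • u j) (∑ j, a j • u j) = 2 * ∑ j, a j ^ 2 := by
      intro a
      rw [hFsum]
      rw [Finset.mul_sum]
      refine Finset.sum_congr rfl ?_
      intro j _
      rw [Finset.sum_eq_single j]
      · rw [hFuu, if_pos rfl]; ring
      · intro k _ hk
        rw [hFuu, if_neg (Ne.symm hk)]; ring
      · intro h; exact absurd (Finset.mem_univ j) h
    have hQval : ∀ (a : Fin m → ℝ),
        fForm 𝔤 lam mu (∑ j, a j • w j) (∑ j, a j • w j) = -2 * ∑ j, a j ^ 2 := by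
      intro a
      rw [hFsum]
      rw [show (-2 : ℝ) * ∑ j, a j ^ 2 = ∑ j, -2 * a j ^ 2 by rw [Finset.mul_sum]]
      refine Finset.sum_congr rfl ?_
      intro j _
      rw [Finset.sum_eq_single j]
      · rw [hFww, if_pos rfl]; ring
      · intro k _ hk
        rw [hFww, if_neg (Ne.symm hk)]; ring
      · intro h; exact absurd (Finset.mem_univ j) h
    have sumsq_pos : ∀ (a : Fin m → ℝ), (∃ j, a j ≠ 0) → 0 < ∑ j, a j ^ 2 := by
      rintro a ⟨j, hj⟩
      have h1 : a j ^ 2 ≤ ∑ k, a k ^ 2 :=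
        Finset.single_le_sum (fun k _ => sq_nonneg (a k)) (Finset.mem_univ j)
      have h2 : 0 < a j ^ 2 := by positivity
      linarith
    have hPpos : ∀ x ∈ P, x ≠ 0 → 0 < fForm 𝔤 lam mu x x := by
      intro x hx hx0
      rw [hP, Submodule.mem_span_range_iff_exists_fun] at hx
      obtain ⟨a, ha⟩ := hx
      have hex : ∃ j, a j ≠ 0 := by
        by_contra h
        push_neg at h
        apply hx0
        rw [← ha]
        simp [h]
      rw [← ha, hPval]
      have := sumsq_pos a hex
      linarith
    have hQneg : ∀ x ∈ Q, x ≠ 0 → fForm 𝔤 lam mu x x < 0 := by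
      intro x hx hx0
      rw [hQ, Submodule.mem_span_range_iff_exists_fun] at hx
      obtain ⟨a, ha⟩ := hx
      have hex : ∃ j, a j ≠ 0 := by
        by_contra h
        push_neg at h
        apply hx0
        rw [← ha]
        simp [h]
      rw [← ha, hQval]
      have := sumsq_pos a hex
      linarith
    -- linear independence
    have huind : LinearIndependent ℝ u := by
      rw [Fintype.linearIndependent_iff]
      intro a ha j
      by_contra hj
      have h1 := hPval a
      rw [ha, show fForm 𝔤 lam mu 0 0 = 0 by simp [fForm]] at h1
      have hpos := sumsq_pos a ⟨j, hj⟩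
      linarith
    have hwind : LinearIndependent ℝ w := by
      rw [Fintype.linearIndependent_iff]
      intro a ha j
      by_contra hj
      have := hQval a
      rw [ha, show fForm 𝔤 lam mu 0 0 = 0 by simp [fForm]] at this
      have hpos := sumsq_pos a ⟨j, hj⟩
      linarith
    have hPle : P ≤ 𝔫 := by
      rw [hP, Submodule.span_le]
      rintro x ⟨j, rfl⟩
      exact humem j
    have hQle : Q ≤ 𝔫 := by
      rw [hQ, Submodule.span_le]
      rintro x ⟨j, rfl⟩
      exact hwmem j
    have hPQbot : P ⊓ Q = ⊥ := by
      rw [Submodule.eq_bot_iff]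
      intro x hx
      by_contra hx0
      have h1 := hPpos x (Submodule.mem_inf.1 hx).1 hx0
      have h2 := hQneg x (Submodule.mem_inf.1 hx).2 hx0
      linarith
    -- spanning
    have hterm : ∀ (z : ℂ) (j : Fin m), z • (b j : 𝔤) ∈ P ⊔ Q := by
      intro z j
      have hz : z • (b j : 𝔤)
          = ((z / r j).re : ℝ) • u j + ((z / r j).im : ℝ) • w j := by
        simp only [hu, hw, ← Complex.coe_smul, smul_smul, ← add_smul]
        congr 1
        set q := z / r j with hq
        have h1 : (q.re : ℂ) + (q.im : ℂ) * Complex.I = q := by apply Complex.ext <;> simp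
        have h2 : (q.re : ℂ) * r j + (q.im : ℂ) * (Complex.I * r j)
            = ((q.re : ℂ) + (q.im : ℂ) * Complex.I) * r j := by ring
        rw [h2, h1, hq, div_mul_cancel₀ z (hr0 j)]
      rw [hz]
      exact Submodule.add_mem _
        (Submodule.mem_sup_left (Submodule.smul_mem _ _
          (Submodule.subset_span ⟨j, rfl⟩)))
        (Submodule.mem_sup_right (Submodule.smul_mem _ _
          (Submodule.subset_span ⟨j, rfl⟩)))
    have hPQsup : P ⊔ Q = 𝔫 := by
      refine le_antisymm (sup_le hPle hQle) ?_
      intro x hx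
      have hrepr : ∑ k, (b.repr ⟨x, hx⟩ k) • b k = (⟨x, hx⟩ : N) := b.sum_repr _
      have hx' : x = ∑ k, (b.repr ⟨x, hx⟩ k) • (b k : 𝔤) := by
        have := congrArg (Submodule.subtype N) hrepr
        simp only [map_sum, Submodule.coe_subtype, SetLike.val_smul] at this
        exact this.symm
      rw [hx']
      exact Submodule.sum_mem _ fun k _ => hterm _ k
    -- dimensions
    haveI : FiniteDimensional ℝ 𝔤 := FiniteDimensional.complexToReal 𝔤
    have hPrank : finrank ℝ P = m := by
      rw [hP, finrank_span_eq_card huind, Fintype.card_fin]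
    have hQrank : finrank ℝ Q = m := by
      rw [hQ, finrank_span_eq_card hwind, Fintype.card_fin]
    have hmn : m = n := by
      have h1 : finrank ℝ (P ⊔ Q : Submodule ℝ 𝔤) + finrank ℝ (P ⊓ Q : Submodule ℝ 𝔤)
          = finrank ℝ P + finrank ℝ Q := Submodule.finrank_sup_add_finrank_inf_eq P Q
      rw [hPQsup, hPQbot, hPrank, hQrank, hdim] at h1
      simp only [finrank_bot, add_zero] at h1
      omega
    exact ⟨P, Q, hPle, hQle, hmn ▸ hPrank, hmn ▸ hQrank, hPQbot, hPQsup, hPpos, hQneg⟩
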